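/- Let σ̂ > 0, Δ ∈ ℝ, and λ ≥ 0. For μ ∈ ℝ let g_μ denote the Gaussian density g_μ(x) = (1/√(2πσ̂²))·exp(-(x-μ)²/(2σ̂²)). Then ∫_ℝ g₀(x) · ( g₀(x) / g_{-Δ}(x) )^λ dx = exp( λ(λ+1)·Δ² / (2σ̂²) ). In particular, the logarithm of the moment generating function at λ of the privacy loss of the Gaussian mechanism with sensitivity Δ and noise standard deviation σ̂ equals (λ² + λ)·Δ²/(2σ̂²). -/

import Mathlib

open Real MeasureTheory

/-- The Gaussian density with mean `μ` and standard deviation `σ`. -/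
noncomputable def gaussDensity (σ μ x : ℝ) : ℝ :=
  (1 / Real.sqrt (2 * π * σ ^ 2)) * Real.exp (-(x - μ) ^ 2 / (2 * σ ^ 2))

lemma integral_gaussDensity (σ μ : ℝ) (hσ : 0 < σ) :
    ∫ x : ℝ, gaussDensity σ μ x = 1 := by
  have hC : (0:ℝ) < 2 * π * σ ^ 2 := by positivity
  unfold gaussDensity
  rw [integral_const_mul]
  have : ∫ x : ℝ, Real.exp (-(x - μ) ^ 2 / (2 * σ ^ 2))
      = ∫ x : ℝ, Real.exp (-(1 / (2 * σ ^ 2)) * x ^ 2) := by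
    rw [← integral_sub_right_eq_self (fun x => Real.exp (-(1 / (2 * σ ^ 2)) * x ^ 2)) μ]
    congr 1; funext x; congr 1; field_simp
  rw [this, integral_gaussian]
  have hb : π / (1 / (2 * σ ^ 2)) = 2 * π * σ ^ 2 := by field_simp
  rw [hb]
  rw [one_div, inv_mul_cancel₀ (by positivity : Real.sqrt (2 * π * σ ^ 2) ≠ 0)]

/-- The moment generating function at `λ ≥ 0` of the privacy loss of the Gaussian mechanism
with sensitivity `Δ` and noise standard deviation `σ̂ > 0`:
`∫ g₀(x) · (g₀(x)/g₋Δ(x))^λ dx = exp (λ(λ+1)Δ²/(2σ̂²))`; equivalently, the log of this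
moment generating function equals `(λ² + λ)·Δ²/(2σ̂²)`. -/
theorem mgf_privacy_loss_gaussian (σ Δ l : ℝ) (hσ : 0 < σ) (hl : 0 ≤ l) :
    ∫ x : ℝ, gaussDensity σ 0 x * (gaussDensity σ 0 x / gaussDensity σ (-Δ) x) ^ l
      = Real.exp (l * (l + 1) * Δ ^ 2 / (2 * σ ^ 2)) := by
  have hσ2 : (σ:ℝ) ^ 2 ≠ 0 := by positivity
  have hC : (0:ℝ) < Real.sqrt (2 * π * σ ^ 2) := by positivity
  have key : ∀ x : ℝ, gaussDensity σ 0 x * (gaussDensity σ 0 x / gaussDensity σ (-Δ) x) ^ l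
      = Real.exp (l * (l + 1) * Δ ^ 2 / (2 * σ ^ 2)) * gaussDensity σ (l * Δ) x := by
    intro x
    unfold gaussDensity
    rw [mul_div_mul_left _ _ (by positivity : (1:ℝ) / Real.sqrt (2 * π * σ ^ 2) ≠ 0),
      ← Real.exp_sub, ← Real.exp_mul]
    rw [mul_assoc, ← Real.exp_add, mul_left_comm, ← Real.exp_add]
    congr 2
    field_simp
    ring
  simp_rw [key]
  rw [integral_const_mul, integral_gaussDensity σ (l * Δ) hσ, mul_one]
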